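/- Fix x₀ > 0 and set p₀₁ = (1/(aυ))·exp(−x₀ − 2υ·e^{x₀}). Then p·∂²φ/∂x²(x,p) ≤ 1/a for all x ≤ x₀ and all p with 0 < p ≤ p₀₁. -/

import Mathlib

/-- The function `φ(x,p) = ln Σ_{n≥0} (υⁿ/n!)·exp(xn − (ap/2)n²)`. -/
noncomputable def phi (υ a x p : ℝ) : ℝ :=
  Real.log (∑' n : ℕ, (υ ^ n / (Nat.factorial n : ℝ)) *
    Real.exp (x * n - (a * p / 2) * (n : ℝ) ^ 2))

/-- Auxiliary: the `k`-times `n`-multiplied term of the series. -/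
noncomputable def myF (υ c : ℝ) (k n : ℕ) (x : ℝ) : ℝ :=
  (n : ℝ) ^ k * (υ ^ n / (Nat.factorial n : ℝ) * Real.exp (x * n - c * (n : ℝ) ^ 2))

lemma myF_nonneg {υ : ℝ} (hυ : 0 < υ) (c : ℝ) (k n : ℕ) (x : ℝ) :
    0 ≤ myF υ c k n x := by
  unfold myF
  positivity

lemma myF_hasDerivAt (υ c : ℝ) (k n : ℕ) (x : ℝ) :
    HasDerivAt (fun y => myF υ c k n y) (myF υ c (k + 1) n x) x := by
  have h1 : HasDerivAt (fun y : ℝ => y * n - c * (n : ℝ) ^ 2) (n : ℝ) x := by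
    simpa using ((hasDerivAt_id x).mul_const (n : ℝ)).sub_const (c * (n : ℝ) ^ 2)
  have h2 := (h1.exp).const_mul ((n : ℝ) ^ k * (υ ^ n / (Nat.factorial n : ℝ)))
  have hfun : (fun y => myF υ c k n y)
      = fun y => ((n : ℝ) ^ k * (υ ^ n / (Nat.factorial n : ℝ))) *
        Real.exp (y * n - c * (n : ℝ) ^ 2) := by
    funext y; unfold myF; ring
  rw [hfun]
  have hval : myF υ c (k + 1) n x = ((n : ℝ) ^ k * (υ ^ n / (Nat.factorial n : ℝ))) *
      (Real.exp (x * n - c * (n : ℝ) ^ 2) * n) := by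
    unfold myF
    ring
  rw [hval]
  exact h2

lemma myF_le {υ c : ℝ} (hυ : 0 < υ) (hc : 0 ≤ c) (k n : ℕ) {x R : ℝ} (hxR : x ≤ R) :
    myF υ c k n x ≤ (2 ^ k * (υ * Real.exp R)) ^ n / (Nat.factorial n : ℝ) := by
  have hexp : Real.exp (x * n - c * (n : ℝ) ^ 2) ≤ Real.exp R ^ n := by
    rw [← Real.exp_nat_mul]
    apply Real.exp_le_exp.2
    have h1 : x * n ≤ R * n := mul_le_mul_of_nonneg_right hxR (Nat.cast_nonneg n)
    nlinarith [mul_nonneg hc (sq_nonneg (n : ℝ))]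
  have hn : (n : ℝ) ^ k ≤ ((2 : ℝ) ^ k) ^ n := by
    have h2 : (n : ℝ) ≤ 2 ^ n := by exact_mod_cast (Nat.lt_two_pow_self (n := n)).le
    calc (n : ℝ) ^ k ≤ ((2 : ℝ) ^ n) ^ k := by
          exact pow_le_pow_left₀ (Nat.cast_nonneg n) h2 k
      _ = ((2 : ℝ) ^ k) ^ n := by rw [← pow_mul, ← pow_mul, Nat.mul_comm]
  have hfact : (0 : ℝ) < (Nat.factorial n : ℝ) := by
    exact_mod_cast Nat.factorial_pos n
  calc myF υ c k n x
      ≤ ((2 : ℝ) ^ k) ^ n * (υ ^ n / (Nat.factorial n : ℝ) * Real.exp R ^ n) := by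
        unfold myF
        apply mul_le_mul hn _ (by positivity) (by positivity)
        apply mul_le_mul_of_nonneg_left hexp (by positivity)
    _ = (2 ^ k * (υ * Real.exp R)) ^ n / (Nat.factorial n : ℝ) := by
        rw [mul_pow, mul_pow]
        field_simp

lemma myF_summable {υ c : ℝ} (hυ : 0 < υ) (hc : 0 ≤ c) (k : ℕ) (x : ℝ) :
    Summable (fun n => myF υ c k n x) :=
  Summable.of_nonneg_of_le (fun n => myF_nonneg hυ c k n x)
    (fun n => myF_le hυ hc k n le_rfl)
    (Real.summable_pow_div_factorial (2 ^ k * (υ * Real.exp x)))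

lemma tsum_myF_hasDerivAt {υ c : ℝ} (hυ : 0 < υ) (hc : 0 ≤ c) (k : ℕ) {x R : ℝ}
    (hxR : x < R) :
    HasDerivAt (fun y => ∑' n, myF υ c k n y) (∑' n, myF υ c (k + 1) n x) x := by
  apply hasDerivAt_tsum_of_isPreconnected
    (Real.summable_pow_div_factorial (2 ^ (k + 1) * (υ * Real.exp R)))
    (isOpen_Iio (a := R)) (isPreconnected_Iio)
    (fun n y _ => myF_hasDerivAt υ c k n y)
    (fun n y hy => ?_) (hxR : x ∈ Set.Iio R) (myF_summable hυ hc k x) hxR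
  rw [Real.norm_eq_abs, abs_of_nonneg (myF_nonneg hυ c (k + 1) n y)]
  exact myF_le hυ hc (k + 1) n (le_of_lt hy)

lemma one_le_tsum_myF {υ c : ℝ} (hυ : 0 < υ) (hc : 0 ≤ c) (x : ℝ) :
    1 ≤ ∑' n, myF υ c 0 n x := by
  have h := Summable.le_tsum (myF_summable hυ hc 0 x) 0 (fun j _ => myF_nonneg hυ c 0 j x)
  simpa [myF] using h

lemma myF_two_succ_le {υ c : ℝ} (hυ : 0 < υ) (hc : 0 ≤ c) {x x₀ : ℝ} (hx : x ≤ x₀)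
    (n : ℕ) :
    myF υ c 2 (n + 1) x ≤
      (υ * Real.exp x₀) * ((2 * (υ * Real.exp x₀)) ^ n / (Nat.factorial n : ℝ)) := by
  have hfact : (0 : ℝ) < (Nat.factorial n : ℝ) := by exact_mod_cast Nat.factorial_pos n
  have hexp : Real.exp (x * ((n : ℕ) + 1 : ℕ) - c * (((n : ℕ) + 1 : ℕ) : ℝ) ^ 2)
      ≤ Real.exp x₀ ^ (n + 1) := by
    rw [← Real.exp_nat_mul]
    apply Real.exp_le_exp.2
    push_cast
    have h1 : x * ((n : ℝ) + 1) ≤ x₀ * ((n : ℝ) + 1) :=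
      mul_le_mul_of_nonneg_right hx (by positivity)
    nlinarith [mul_nonneg hc (sq_nonneg ((n : ℝ) + 1))]
  have hfs : ((Nat.factorial (n + 1) : ℕ) : ℝ) = ((n : ℝ) + 1) * (Nat.factorial n : ℝ) := by
    rw [Nat.factorial_succ]; push_cast; ring
  have step1 : myF υ c 2 (n + 1) x
      ≤ ((n : ℝ) + 1) ^ 2 * (υ ^ (n + 1) / (Nat.factorial (n + 1) : ℝ)
          * Real.exp x₀ ^ (n + 1)) := by
    unfold myF
    push_cast
    have hcoef : (0 : ℝ) ≤ ((n : ℝ) + 1) ^ 2 * (υ ^ (n + 1) / (Nat.factorial (n + 1) : ℝ)) := by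
      positivity
    calc ((n : ℝ) + 1) ^ 2 * (υ ^ (n + 1) / (Nat.factorial (n + 1) : ℝ)
          * Real.exp (x * ((n : ℝ) + 1) - c * ((n : ℝ) + 1) ^ 2))
        ≤ ((n : ℝ) + 1) ^ 2 * (υ ^ (n + 1) / (Nat.factorial (n + 1) : ℝ)
          * Real.exp x₀ ^ (n + 1)) := by
          apply mul_le_mul_of_nonneg_left _ (by positivity)
          apply mul_le_mul_of_nonneg_left _ (by positivity)
          have := hexp
          push_cast at this
          exact this
      _ = _ := rfl
  have h2n : ((n : ℝ) + 1) ≤ 2 ^ n := by exact_mod_cast (Nat.lt_two_pow_self (n := n))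
  have step2 : ((n : ℝ) + 1) ^ 2 * (υ ^ (n + 1) / (Nat.factorial (n + 1) : ℝ)
        * Real.exp x₀ ^ (n + 1))
      ≤ (υ * Real.exp x₀) * ((2 * (υ * Real.exp x₀)) ^ n / (Nat.factorial n : ℝ)) := by
    have hTpos : (0 : ℝ) ≤ (υ * Real.exp x₀) ^ (n + 1) / (Nat.factorial n : ℝ) := by
      positivity
    have hL : ((n : ℝ) + 1) ^ 2 * (υ ^ (n + 1) / (Nat.factorial (n + 1) : ℝ)
          * Real.exp x₀ ^ (n + 1))
        = ((n : ℝ) + 1) * ((υ * Real.exp x₀) ^ (n + 1) / (Nat.factorial n : ℝ)) := by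
      rw [hfs, mul_pow]
      field_simp
    have hR : (υ * Real.exp x₀) * ((2 * (υ * Real.exp x₀)) ^ n / (Nat.factorial n : ℝ))
        = (2 : ℝ) ^ n * ((υ * Real.exp x₀) ^ (n + 1) / (Nat.factorial n : ℝ)) := by
      rw [mul_pow, pow_succ]
      field_simp
    rw [hL, hR]
    exact mul_le_mul_of_nonneg_right h2n hTpos
  exact step1.trans step2

lemma tsum_myF_two_le {υ c : ℝ} (hυ : 0 < υ) (hc : 0 ≤ c) {x x₀ : ℝ} (hx : x ≤ x₀) :
    (∑' n, myF υ c 2 n x) ≤ (υ * Real.exp x₀) * Real.exp (2 * (υ * Real.exp x₀)) := by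
  have hsum := myF_summable hυ hc 2 x
  rw [Summable.tsum_eq_zero_add hsum]
  have h0 : myF υ c 2 0 x = 0 := by simp [myF]
  rw [h0, zero_add]
  have hsumR : Summable (fun n : ℕ =>
      (υ * Real.exp x₀) * ((2 * (υ * Real.exp x₀)) ^ n / (Nat.factorial n : ℝ))) :=
    (Real.summable_pow_div_factorial (2 * (υ * Real.exp x₀))).mul_left _
  have hsumL : Summable (fun n : ℕ => myF υ c 2 (n + 1) x) := by
    have := hsum.comp_injective (Nat.succ_injective)
    exact this
  calc (∑' n : ℕ, myF υ c 2 (n + 1) x)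
      ≤ ∑' n : ℕ, (υ * Real.exp x₀) * ((2 * (υ * Real.exp x₀)) ^ n / (Nat.factorial n : ℝ)) :=
        Summable.tsum_le_tsum (fun n => myF_two_succ_le hυ hc hx n) hsumL hsumR
    _ = (υ * Real.exp x₀) * Real.exp (2 * (υ * Real.exp x₀)) := by
        rw [tsum_mul_left]
        congr 1
        rw [Real.exp_eq_exp_ℝ, NormedSpace.exp_eq_tsum_div]

theorem stmt_17 (υ a : ℝ) (hυ : 0 < υ) (ha : 1 < a) (x₀ : ℝ) (hx₀ : 0 < x₀) :
    ∀ x ≤ x₀, ∀ p : ℝ, 0 < p →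
      p ≤ (1 / (a * υ)) * Real.exp (-x₀ - 2 * υ * Real.exp x₀) →
      p * deriv (deriv (fun x' => phi υ a x' p)) x ≤ 1 / a := by
  intro x hx p hp hple
  have ha0 : 0 < a := lt_trans one_pos ha
  set c : ℝ := a * p / 2 with hcdef
  have hc : 0 ≤ c := by positivity
  set R : ℝ := x₀ + 1 with hRdef
  have hxR : x < R := lt_of_le_of_lt hx (by simp [hRdef])
  have hphi : (fun x' => phi υ a x' p) = fun y => Real.log (∑' n, myF υ c 0 n y) := by
    funext y
    unfold phi myF
    simp [hcdef]
  -- derivatives of the sums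
  have hS0 : ∀ y ∈ Set.Iio R, HasDerivAt (fun z => ∑' n, myF υ c 0 n z)
      (∑' n, myF υ c 1 n y) y := fun y hy => tsum_myF_hasDerivAt hυ hc 0 hy
  have hS1 : ∀ y ∈ Set.Iio R, HasDerivAt (fun z => ∑' n, myF υ c 1 n z)
      (∑' n, myF υ c 2 n y) y := fun y hy => tsum_myF_hasDerivAt hυ hc 1 hy
  have hSpos : ∀ y : ℝ, (0 : ℝ) < ∑' n, myF υ c 0 n y := fun y =>
    lt_of_lt_of_le one_pos (one_le_tsum_myF hυ hc y)
  -- first derivative of phi on Iio R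
  have hEq : deriv (fun x' => phi υ a x' p)
      =ᶠ[nhds x] fun y => (∑' n, myF υ c 1 n y) / (∑' n, myF υ c 0 n y) := by
    filter_upwards [isOpen_Iio.mem_nhds hxR] with y hy
    rw [hphi]
    exact ((hS0 y hy).log (hSpos y).ne').deriv
  have hquot : HasDerivAt (fun y => (∑' n, myF υ c 1 n y) / (∑' n, myF υ c 0 n y))
      (((∑' n, myF υ c 2 n x) * (∑' n, myF υ c 0 n x)
        - (∑' n, myF υ c 1 n x) * (∑' n, myF υ c 1 n x))
        / (∑' n, myF υ c 0 n x) ^ 2) x :=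
    (hS1 x hxR).div (hS0 x hxR) (hSpos x).ne'
  have hd2 : deriv (deriv (fun x' => phi υ a x' p)) x
      = ((∑' n, myF υ c 2 n x) * (∑' n, myF υ c 0 n x)
        - (∑' n, myF υ c 1 n x) * (∑' n, myF υ c 1 n x))
        / (∑' n, myF υ c 0 n x) ^ 2 := by
    rw [hEq.deriv_eq]
    exact hquot.deriv
  rw [hd2]
  set A := ∑' n, myF υ c 2 n x with hA
  set B := ∑' n, myF υ c 0 n x with hB
  set C := ∑' n, myF υ c 1 n x with hC
  have hB1 : 1 ≤ B := one_le_tsum_myF hυ hc x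
  have hB0 : 0 < B := hSpos x
  have hA0 : 0 ≤ A := tsum_nonneg (fun n => myF_nonneg hυ c 2 n x)
  have hAle : A ≤ (υ * Real.exp x₀) * Real.exp (2 * (υ * Real.exp x₀)) :=
    tsum_myF_two_le hυ hc hx
  have h1 : (A * B - C * C) / B ^ 2 ≤ A := by
    rw [div_le_iff₀ (by positivity)]
    nlinarith [sq_nonneg C, mul_nonneg (mul_nonneg hA0 hB0.le) (sub_nonneg.2 hB1)]
  have h2 : p * ((A * B - C * C) / B ^ 2) ≤ p * A :=
    mul_le_mul_of_nonneg_left h1 hp.le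
  have h3 : p * A ≤ p * ((υ * Real.exp x₀) * Real.exp (2 * (υ * Real.exp x₀))) :=
    mul_le_mul_of_nonneg_left hAle hp.le
  have h4 : p * ((υ * Real.exp x₀) * Real.exp (2 * (υ * Real.exp x₀)))
      ≤ ((1 / (a * υ)) * Real.exp (-x₀ - 2 * υ * Real.exp x₀))
        * ((υ * Real.exp x₀) * Real.exp (2 * (υ * Real.exp x₀))) :=
    mul_le_mul_of_nonneg_right hple (by positivity)
  have hexp1 : Real.exp (-x₀ - 2 * υ * Real.exp x₀) * Real.exp x₀
      * Real.exp (2 * (υ * Real.exp x₀)) = 1 := by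
    rw [← Real.exp_add, ← Real.exp_add,
      show -x₀ - 2 * υ * Real.exp x₀ + x₀ + 2 * (υ * Real.exp x₀) = 0 by ring,
      Real.exp_zero]
  have h5 : ((1 / (a * υ)) * Real.exp (-x₀ - 2 * υ * Real.exp x₀))
      * ((υ * Real.exp x₀) * Real.exp (2 * (υ * Real.exp x₀))) = 1 / a := by
    calc ((1 / (a * υ)) * Real.exp (-x₀ - 2 * υ * Real.exp x₀))
        * ((υ * Real.exp x₀) * Real.exp (2 * (υ * Real.exp x₀)))
        = (1 / (a * υ)) * υ * (Real.exp (-x₀ - 2 * υ * Real.exp x₀) * Real.exp x₀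
          * Real.exp (2 * (υ * Real.exp x₀))) := by ring
      _ = (1 / (a * υ)) * υ := by rw [hexp1, mul_one]
      _ = 1 / a := by field_simp
    
  linarith [h2, h3, h4.trans_eq h5]
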